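/- Let n ≥ 1, k ≥ 1, let F be a cdf which is continuous on ℝ, let G_1,…,G_m be cdfs, and let u_i, v_i : [0,1]^m → [0,1] (i = 1,…,k) be continuous functions, u_i non-decreasing and v_i non-increasing in each variable, with u_i(0,…,0) = 0, u_i(1,…,1) = 1, v_i(0,…,0) = 1 and v_i(1,…,1) = 0. Let α_i ≥ 0 and 0 ≤ θ_i ≤ 1 for i = 1,…,k, and define 𝒰(t) = ∏_{i=1}^k ((1−θ_i)u_i(t) + θ_i)^{α_i} and ϑ(t) = ∏_{i=1}^k (θ_i v_i(t))^{α_i} for t ∈ [0,1]^m. Let μ_j, ℓ_j, m_j, ν_j : [0,1]^m → EReal (j = 1,…,n) be continuous, with μ_j, m_j non-decreasing and ℓ_j, ν_j non-increasing in each variable, and assume 𝒰, ϑ, μ_j, ℓ_j, m_j, ν_j satisfy conditions (d3)–(d9) of Corollary 1.2, namely: if 𝒰(0,…,0) ≠ ϑ(0,…,0) then (𝒰(0,…,0) = 0 or μ_j(0,…,0) = ℓ_j(0,…,0) for all j) and (ϑ(0,…,0) = 0 or m_j(0,…,0) = ν_j(0,…,0) for all j); if 𝒰(0,…,0) = ϑ(0,…,0)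 ≠ 0 then μ_j(0,…,0) = ν_j(0,…,0) and m_j(0,…,0) = ℓ_j(0,…,0) for all j; ℓ_j(0,…,0) ≤ μ_j(0,…,0) for all j and if ϑ(0,…,0) ≠ 0 then m_j(1,…,1) ≤ ν_j(1,…,1) for all j; μ_n(1,…,1) ≥ sup{x : F(x) < 1} and ℓ_1(1,…,1) ≤ inf{x : F(x) > 0}; ϑ(1,…,1) = 0 or ν_j(1,…,1) = m_j(1,…,1) for all j; μ_j(1,…,1) = ℓ_{j+1}(1,…,1) for j = 1,…,n−1. Then, writing (·)(x) = (G_1(x),…,G_m(x)), the function H(x) = ∏_{i=1}^k ((1−θ_i)u_i(·)(x) + θ_i)^{α_i} · Σ_{j=1}^n (F̄(μ_j(·)(x)) − F̄(ℓ_j(·)(x))) − ∏_{i=1}^k (θ_i v_i(·)(x))^{α_i} · Σ_{j=1}^n (F̄(ν_j(·)(x)) − F̄(m_j(·)(x))) is a cdf. -/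

import Mathlib

open Filter Topology Set BigOperators unitInterval

/-- A cumulative distribution function: non-decreasing, right-continuous,
tending to 0 at `-∞` and to 1 at `+∞`. -/
def IsCDF (F : ℝ → ℝ) : Prop :=
  Monotone F ∧ (∀ x : ℝ, ContinuousWithinAt F (Set.Ici x) x) ∧
    Tendsto F atBot (nhds 0) ∧ Tendsto F atTop (nhds 1)

/-- The extension of a cdf to the extended reals, with value 0 at `⊥` and 1 at `⊤`. -/
noncomputable def extCDF (F : ℝ → ℝ) (a : EReal) : ℝ :=
  if a = ⊥ then 0 else if a = ⊤ then 1 else F a.toReal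

/-- `𝒰(t) = ∏ i, ((1 - θ i) * u i t + θ i) ^ (α i)` (real powers). -/
noncomputable def prodU {k m : ℕ} (θ α : Fin k → ℝ)
    (u : Fin k → (Fin m → unitInterval) → ℝ) (t : Fin m → unitInterval) : ℝ :=
  ∏ i, ((1 - θ i) * u i t + θ i) ^ (α i)

/-- `ϑ(t) = ∏ i, (θ i * v i t) ^ (α i)` (real powers). -/
noncomputable def prodV {k m : ℕ} (θ α : Fin k → ℝ)
    (v : Fin k → (Fin m → unitInterval) → ℝ) (t : Fin m → unitInterval) : ℝ :=
  ∏ i, (θ i * v i t) ^ (α i)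

section Helpers

variable {F : ℝ → ℝ}

lemma cdf_nonneg (hF : IsCDF F) (x : ℝ) : 0 ≤ F x :=
  le_of_tendsto hF.2.2.1 (by filter_upwards [eventually_le_atBot x] with y hy using hF.1 hy)

lemma cdf_le_one (hF : IsCDF F) (x : ℝ) : F x ≤ 1 :=
  ge_of_tendsto hF.2.2.2 (by filter_upwards [eventually_ge_atTop x] with y hy using hF.1 hy)

@[simp] lemma extCDF_bot : extCDF F ⊥ = 0 := rfl
@[simp] lemma extCDF_top : extCDF F ⊤ = 1 := rfl
@[simp] lemma extCDF_coe (x : ℝ) : extCDF F (x : EReal) = F x := by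
  simp [extCDF, EReal.toReal_coe]

lemma extCDF_nonneg (hF : IsCDF F) (a : EReal) : 0 ≤ extCDF F a := by
  induction a using EReal.rec with
  | bot => simp
  | coe x => simpa using cdf_nonneg hF x
  | top => simp [extCDF]

lemma extCDF_le_one (hF : IsCDF F) (a : EReal) : extCDF F a ≤ 1 := by
  induction a using EReal.rec with
  | bot => simp
  | coe x => simpa using cdf_le_one hF x
  | top => simp [extCDF]

lemma extCDF_mono (hF : IsCDF F) : Monotone (extCDF F) := by
  intro a b hab
  induction a using EReal.rec with
  | bot => exact extCDF_nonneg hF b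
  | coe x =>
    induction b using EReal.rec with
    | bot => simp at hab
    | coe y => simpa using hF.1 (by exact_mod_cast hab)
    | top => simpa using cdf_le_one hF x
  | top =>
    have : b = ⊤ := top_le_iff.mp hab
    simp [this]

lemma extCDF_tendsto_bot (hF : IsCDF F) : Tendsto (extCDF F) (nhds (⊥ : EReal)) (nhds 0) := by
  refine tendsto_order.2 ⟨fun a' ha' => Eventually.of_forall fun b =>
    lt_of_lt_of_le ha' (extCDF_nonneg hF b), fun ε hε => ?_⟩
  obtain ⟨x₀, hx₀⟩ := (hF.2.2.1.eventually (eventually_lt_nhds hε)).exists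
  filter_upwards [Iio_mem_nhds
    (show (⊥ : EReal) < (x₀ : EReal) from bot_lt_iff_ne_bot.2 (by simp))] with a ha
  induction a using EReal.rec with
  | bot => simpa using hε
  | coe y =>
    have : y < x₀ := by exact_mod_cast (mem_Iio.mp ha)
    simpa using lt_of_le_of_lt (hF.1 this.le) hx₀
  | top => exact absurd (mem_Iio.mp ha) (not_lt.2 le_top)

lemma extCDF_tendsto_top (hF : IsCDF F) : Tendsto (extCDF F) (nhds (⊤ : EReal)) (nhds 1) := by
  refine tendsto_order.2 ⟨fun a' ha' => ?_, fun ε hε => Eventually.of_forall fun b =>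
    lt_of_le_of_lt (extCDF_le_one hF b) hε⟩
  obtain ⟨x₀, hx₀⟩ := (hF.2.2.2.eventually (eventually_gt_nhds ha')).exists
  filter_upwards [Ioi_mem_nhds
    (show (x₀ : EReal) < ⊤ from lt_top_iff_ne_top.2 (by simp))] with a ha
  induction a using EReal.rec with
  | bot => exact absurd (mem_Ioi.mp ha) (not_lt.2 bot_le)
  | coe y =>
    have : x₀ < y := by exact_mod_cast (mem_Ioi.mp ha)
    simpa using lt_of_lt_of_le hx₀ (hF.1 this.le)
  | top => simpa using ha'

lemma extCDF_continuous (hF : IsCDF F) (hFc : Continuous F) : Continuous (extCDF F) := by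
  rw [continuous_iff_continuousAt]
  intro a
  induction a using EReal.rec with
  | bot => exact extCDF_tendsto_bot hF
  | coe x =>
    rw [← EReal.isOpenEmbedding_coe.continuousAt_iff]
    simpa [Function.comp_def, ContinuousAt, extCDF_coe] using hFc.continuousAt (x := x)
  | top => exact extCDF_tendsto_top hF

lemma extCDF_eq_one (hF : IsCDF F) (hFc : Continuous F) (M : EReal)
    (hM : ∀ x : ℝ, F x < 1 → (x : EReal) ≤ M) : extCDF F M = 1 := by
  induction M using EReal.rec with
  | top => rfl
  | bot =>
    have hall : ∀ x : ℝ, F x = 1 := fun x =>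
      le_antisymm (cdf_le_one hF x) (not_lt.1 fun h => absurd (hM x h) (by simp))
    exact absurd (tendsto_nhds_unique (hF.2.2.1.congr fun x => hall x) tendsto_const_nhds)
      zero_ne_one
  | coe a =>
    have hx : ∀ x : ℝ, a < x → F x = 1 := by
      intro x hax
      refine le_antisymm (cdf_le_one hF x) (not_lt.1 fun h => ?_)
      exact absurd (show x ≤ a by exact_mod_cast hM x h) (not_le.2 hax)
    have h1 : Tendsto F (nhdsWithin a (Ioi a)) (nhds (F a)) :=
      (hFc.tendsto a).mono_left nhdsWithin_le_nhds
    have h2 : Tendsto F (nhdsWithin a (Ioi a)) (nhds 1) := by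
      refine Tendsto.congr' ?_ tendsto_const_nhds
      filter_upwards [self_mem_nhdsWithin] with y hy using (hx y hy).symm
    simpa using tendsto_nhds_unique h1 h2

lemma extCDF_eq_zero (hF : IsCDF F) (hFc : Continuous F) (L : EReal)
    (hL : ∀ x : ℝ, 0 < F x → L ≤ (x : EReal)) : extCDF F L = 0 := by
  induction L using EReal.rec with
  | bot => rfl
  | top =>
    have hall : ∀ x : ℝ, F x = 0 := fun x =>
      le_antisymm (not_lt.1 fun h => absurd (hL x h) (by simp)) (cdf_nonneg hF x)
    exact absurd (tendsto_nhds_unique (hF.2.2.2.congr fun x => hall x) tendsto_const_nhds)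
      one_ne_zero
  | coe a =>
    have hx : ∀ x : ℝ, x < a → F x = 0 := by
      intro x hax
      refine le_antisymm (not_lt.1 fun h => ?_) (cdf_nonneg hF x)
      exact absurd (show a ≤ x by exact_mod_cast hL x h) (not_le.2 hax)
    have h1 : Tendsto F (nhdsWithin a (Iio a)) (nhds (F a)) :=
      (hFc.tendsto a).mono_left nhdsWithin_le_nhds
    have h2 : Tendsto F (nhdsWithin a (Iio a)) (nhds 0) := by
      refine Tendsto.congr' ?_ tendsto_const_nhds
      filter_upwards [self_mem_nhdsWithin] with y hy using (hx y hy).symm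
    simpa using tendsto_nhds_unique h1 h2

end Helpers

/-- First special case of Corollary 1.2: an easy to use method for the
construction of classes of probability distributions. -/
theorem stmt_3
    (n k m : ℕ) (hn : 1 ≤ n) (hk : 1 ≤ k)
    (F : ℝ → ℝ) (hF : IsCDF F) (hFc : Continuous F)
    (G : Fin m → ℝ → ℝ) (hG : ∀ i, IsCDF (G i))
    (hG01 : ∀ i (x : ℝ), G i x ∈ unitInterval)
    (u v : Fin k → (Fin m → unitInterval) → ℝ)
    (huc : ∀ i, Continuous (u i)) (hvc : ∀ i, Continuous (v i))
    (hu01 : ∀ i t, u i t ∈ unitInterval) (hv01 : ∀ i t, v i t ∈ unitInterval)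
    (humono : ∀ i, Monotone (u i)) (hvanti : ∀ i, Antitone (v i))
    (hu0 : ∀ i, u i 0 = 0) (hu1 : ∀ i, u i 1 = 1)
    (hv0 : ∀ i, v i 0 = 1) (hv1 : ∀ i, v i 1 = 0)
    (α θ : Fin k → ℝ) (hα : ∀ i, 0 ≤ α i) (hθ : ∀ i, θ i ∈ unitInterval)
    (μ ℓ mm ν : Fin n → (Fin m → unitInterval) → EReal)
    (hμc : ∀ j, Continuous (μ j)) (hℓc : ∀ j, Continuous (ℓ j))
    (hmc : ∀ j, Continuous (mm j)) (hνc : ∀ j, Continuous (ν j))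
    (d2μ : ∀ j, Monotone (μ j)) (d2m : ∀ j, Monotone (mm j))
    (d2ν : ∀ j, Antitone (ν j)) (d2ℓ : ∀ j, Antitone (ℓ j))
    (d3 : prodU θ α u 0 ≠ prodV θ α v 0 →
      (prodU θ α u 0 = 0 ∨ ∀ j, μ j 0 = ℓ j 0) ∧
        (prodV θ α v 0 = 0 ∨ ∀ j, mm j 0 = ν j 0))
    (d4 : prodU θ α u 0 = prodV θ α v 0 → prodU θ α u 0 ≠ 0 →
      ∀ j, μ j 0 = ν j 0 ∧ mm j 0 = ℓ j 0)
    (d5a : ∀ j, ℓ j 0 ≤ μ j 0)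
    (d5b : prodV θ α v 0 ≠ 0 → ∀ j, mm j 1 ≤ ν j 1)
    (d6a : sSup ((fun x : ℝ => (x : EReal)) '' {x | F x < 1}) ≤ μ ⟨n - 1, by omega⟩ 1)
    (d6b : ℓ ⟨0, by omega⟩ 1 ≤ sInf ((fun x : ℝ => (x : EReal)) '' {x | 0 < F x}))
    (d8 : prodV θ α v 1 = 0 ∨ ∀ j, ν j 1 = mm j 1)
    (d9 : ∀ j : Fin n, ∀ h : (j : ℕ) + 1 < n, μ j 1 = ℓ ⟨(j : ℕ) + 1, h⟩ 1) :
    IsCDF (fun x =>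
      prodU θ α u (fun i => ⟨G i x, hG01 i x⟩) *
          ∑ j, (extCDF F (μ j (fun i => ⟨G i x, hG01 i x⟩))
            - extCDF F (ℓ j (fun i => ⟨G i x, hG01 i x⟩)))
        - prodV θ α v (fun i => ⟨G i x, hG01 i x⟩) *
          ∑ j, (extCDF F (ν j (fun i => ⟨G i x, hG01 i x⟩))
            - extCDF F (mm j (fun i => ⟨G i x, hG01 i x⟩)))) := by
  -- basic order facts about the cube
  have h0le : ∀ t : Fin m → unitInterval, 0 ≤ t := fun t i => by
    show (0 : unitInterval) ≤ t i
    exact Subtype.coe_le_coe.1 (by simpa using (t i).2.1)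
  have hle1 : ∀ t : Fin m → unitInterval, t ≤ 1 := fun t i => by
    show t i ≤ (1 : unitInterval)
    exact Subtype.coe_le_coe.1 (by simpa using (t i).2.2)
  -- abbreviations
  set S : (Fin m → unitInterval) → ℝ :=
    fun t => ∑ j, (extCDF F (μ j t) - extCDF F (ℓ j t)) with hS
  set T : (Fin m → unitInterval) → ℝ :=
    fun t => ∑ j, (extCDF F (ν j t) - extCDF F (mm j t)) with hT
  set Φ : (Fin m → unitInterval) → ℝ :=
    fun t => prodU θ α u t * S t - prodV θ α v t * T t with hΦ
  set g : ℝ → (Fin m → unitInterval) := fun x i => ⟨G i x, hG01 i x⟩ with hg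
  -- properties of prodU
  have hUnonneg : ∀ t, 0 ≤ prodU θ α u t := fun t =>
    Finset.prod_nonneg fun i _ => Real.rpow_nonneg
      (by nlinarith [(hθ i).1, (hθ i).2, (hu01 i t).1, (hu01 i t).2]) _
  have hUmono : Monotone (prodU θ α u) := by
    intro s t hst
    refine Finset.prod_le_prod (fun i _ => Real.rpow_nonneg
      (by nlinarith [(hθ i).1, (hθ i).2, (hu01 i s).1, (hu01 i s).2]) _) fun i _ => ?_
    refine Real.rpow_le_rpow
      (by nlinarith [(hθ i).1, (hθ i).2, (hu01 i s).1, (hu01 i s).2]) ?_ (hα i)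
    have := humono i hst
    nlinarith [(hθ i).1, (hθ i).2]
  have hrpowc : ∀ i : Fin k, Continuous (fun x : ℝ => x ^ (α i)) := fun i =>
    continuous_iff_continuousAt.2 fun x => Real.continuousAt_rpow_const x _ (Or.inr (hα i))
  have hUc : Continuous (prodU θ α u) := by
    refine continuous_finset_prod _ fun i _ => ?_
    exact (hrpowc i).comp (((continuous_const.mul (huc i)).add continuous_const))
  -- properties of prodV
  have hVnonneg : ∀ t, 0 ≤ prodV θ α v t := fun t =>
    Finset.prod_nonneg fun i _ => Real.rpow_nonneg
      (mul_nonneg (hθ i).1 (hv01 i t).1) _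
  have hVanti : Antitone (prodV θ α v) := by
    intro s t hst
    refine Finset.prod_le_prod (fun i _ => Real.rpow_nonneg
      (mul_nonneg (hθ i).1 (hv01 i t).1) _) fun i _ => ?_
    exact Real.rpow_le_rpow (mul_nonneg (hθ i).1 (hv01 i t).1)
      (mul_le_mul_of_nonneg_left (hvanti i hst) (hθ i).1) (hα i)
  have hVc : Continuous (prodV θ α v) := by
    refine continuous_finset_prod _ fun i _ => ?_
    exact (hrpowc i).comp (continuous_const.mul (hvc i))
  -- properties of S
  have hℓμ : ∀ j t, ℓ j t ≤ μ j t := fun j t =>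
    le_trans (d2ℓ j (h0le t)) (le_trans (d5a j) (d2μ j (h0le t)))
  have hSnonneg : ∀ t, 0 ≤ S t := fun t =>
    Finset.sum_nonneg fun j _ => sub_nonneg.2 (extCDF_mono hF (hℓμ j t))
  have hSmono : Monotone S := by
    intro s t hst
    exact Finset.sum_le_sum fun j _ => sub_le_sub
      (extCDF_mono hF (d2μ j hst)) (extCDF_mono hF (d2ℓ j hst))
  have hSc : Continuous S := by
    refine continuous_finset_sum _ fun j _ => ?_
    exact ((extCDF_continuous hF hFc).comp (hμc j)).sub
      ((extCDF_continuous hF hFc).comp (hℓc j))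
  have hTc : Continuous T := by
    refine continuous_finset_sum _ fun j _ => ?_
    exact ((extCDF_continuous hF hFc).comp (hνc j)).sub
      ((extCDF_continuous hF hFc).comp (hmc j))
  -- second term monotonicity (as a product)
  have hBT : ∀ s t, s ≤ t → prodV θ α v t * T t ≤ prodV θ α v s * T s := by
    intro s t hst
    by_cases hb : prodV θ α v 0 = 0
    · have hz : ∀ r, prodV θ α v r = 0 := fun r =>
        le_antisymm (hb ▸ hVanti (h0le r)) (hVnonneg r)
      simp [hz]
    · have hmν : ∀ j r, mm j r ≤ ν j r := fun j r =>
        le_trans (d2m j (hle1 r)) (le_trans (d5b hb j) (d2ν j (hle1 r)))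
      have hTnonneg : ∀ r, 0 ≤ T r := fun r =>
        Finset.sum_nonneg fun j _ => sub_nonneg.2 (extCDF_mono hF (hmν j r))
      have hTanti : T t ≤ T s :=
        Finset.sum_le_sum fun j _ => sub_le_sub
          (extCDF_mono hF (d2ν j hst)) (extCDF_mono hF (d2m j hst))
      exact mul_le_mul (hVanti hst) hTanti (hTnonneg t) (hVnonneg s)
  -- monotonicity of Φ
  have hΦmono : Monotone Φ := by
    intro s t hst
    have h1 : prodU θ α u s * S s ≤ prodU θ α u t * S t :=
      mul_le_mul (hUmono hst) (hSmono hst) (hSnonneg s) (hUnonneg t)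
    exact sub_le_sub h1 (hBT s t hst)
  -- continuity of Φ
  have hΦc : Continuous Φ := ((hUc.mul hSc).sub (hVc.mul hTc))
  -- value at 0
  have hUV0 : prodU θ α u 0 = prodV θ α v 0 := by
    unfold prodU prodV
    refine Finset.prod_congr rfl fun i _ => ?_
    rw [hu0 i, hv0 i]; ring_nf
  have hΦ0 : Φ 0 = 0 := by
    by_cases h0 : prodU θ α u 0 = 0
    · simp [hΦ, h0, hUV0 ▸ h0]
    · have hd := d4 hUV0 h0
      have hST : S 0 = T 0 := by
        refine Finset.sum_congr rfl fun j _ => ?_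
        rw [(hd j).1, (hd j).2]
      simp only [hΦ, hUV0, hST, sub_self]
  -- value at 1
  have hU1 : prodU θ α u 1 = 1 := by
    unfold prodU
    refine Finset.prod_eq_one fun i _ => ?_
    rw [hu1 i, mul_one, sub_add_cancel, Real.one_rpow]
  have hS1 : S 1 = 1 := by
    classical
    have hfn1 : extCDF F (μ ⟨n - 1, by omega⟩ 1) = 1 := by
      refine extCDF_eq_one hF hFc _ fun x hx => ?_
      exact le_trans (le_sSup (Set.mem_image_of_mem _ (show x ∈ {x | F x < 1} from hx))) d6a
    have hf0 : extCDF F (ℓ ⟨0, by omega⟩ 1) = 0 := by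
      refine extCDF_eq_zero hF hFc _ fun x hx => ?_
      exact le_trans d6b (sInf_le (Set.mem_image_of_mem _ (show x ∈ {x | 0 < F x} from hx)))
    set f : ℕ → ℝ := fun j =>
      if h : j < n then extCDF F (ℓ ⟨j, h⟩ 1) else extCDF F (μ ⟨n - 1, by omega⟩ 1) with hf
    have key : ∀ j : Fin n, extCDF F (μ j 1) - extCDF F (ℓ j 1)
        = f ((j : ℕ) + 1) - f (j : ℕ) := by
      intro j
      have hfj : f (j : ℕ) = extCDF F (ℓ j 1) := by
        simp only [hf, j.2, dif_pos, Fin.eta]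
      by_cases h : (j : ℕ) + 1 < n
      · have h1 : f ((j : ℕ) + 1) = extCDF F (ℓ ⟨(j : ℕ) + 1, h⟩ 1) := by
          simp only [hf, h, dif_pos]
        rw [h1, hfj, ← d9 j h]
      · have hj : (n - 1 : ℕ) = (j : ℕ) := by omega
        have h1 : f ((j : ℕ) + 1) = extCDF F (μ ⟨n - 1, by omega⟩ 1) := by
          simp only [hf, dif_neg h]
        have hj' : (⟨n - 1, by omega⟩ : Fin n) = j := Fin.ext hj
        rw [h1, hfj, hj']
    calc S 1 = ∑ j : Fin n, (f ((j : ℕ) + 1) - f (j : ℕ)) :=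
          Finset.sum_congr rfl fun j _ => key j
      _ = ∑ j ∈ Finset.range n, (f (j + 1) - f j) := Fin.sum_univ_eq_sum_range (fun j => f (j + 1) - f j) n
      _ = f n - f 0 := Finset.sum_range_sub f n
      _ = 1 := by
          have hn0 : ¬ (n < n) := lt_irrefl n
          have h0n : 0 < n := hn
          simp only [hf, dif_neg hn0, dif_pos h0n]
          rw [hfn1, hf0]; ring
  have hT1 : prodV θ α v 1 * T 1 = 0 := by
    rcases d8 with h | h
    · rw [h, zero_mul]
    · have hT0 : T 1 = 0 := Finset.sum_eq_zero fun j _ => by rw [h j, sub_self]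
      rw [hT0, mul_zero]
  have hΦ1 : Φ 1 = 1 := by
    simp only [hΦ]
    rw [hU1, hS1, hT1, one_mul, sub_zero]
  -- the map into the cube
  have hgmono : Monotone g := fun x y hxy i =>
    Subtype.coe_le_coe.1 (by simpa [hg] using (hG i).1 hxy)
  show IsCDF fun x => Φ (g x)
  refine ⟨fun x y hxy => hΦmono (hgmono hxy), fun x => ?_, ?_, ?_⟩
  · have hgc : ContinuousWithinAt g (Ici x) x := by
      apply continuousWithinAt_pi.2
      intro i
      exact tendsto_subtype_rng.2 ((hG i).2.1 x)
    exact ContinuousAt.comp_continuousWithinAt (hΦc.continuousAt) hgc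
  · have hg0 : Tendsto g atBot (nhds 0) := by
      rw [tendsto_pi_nhds]
      intro i
      rw [tendsto_subtype_rng]
      simpa using (hG i).2.2.1
    have := (hΦc.tendsto 0).comp hg0
    rwa [hΦ0] at this
  · have hg1 : Tendsto g atTop (nhds 1) := by
      rw [tendsto_pi_nhds]
      intro i
      rw [tendsto_subtype_rng]
      simpa using (hG i).2.2.2
    have := (hΦc.tendsto 1).comp hg1
    rwa [hΦ1] at this
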